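/- Let $E/F$ be a degree-$n$ extension of non-archimedean local fields with ramification index $e$ and residue degree $f$, and set $\mathfrak{d}(E/F) = |\pi_F|_F^{f(e-1)}$. Let $\mathrm{res}: \mathcal{N}^r(E) \to \mathcal{N}^{nr}(F)$ be the restriction-of-scalars map sending a norm $\nu_E$ on $E^r$ to the norm on $F^{nr}$ defined, via the orthogonal basis $\{\xi^i\pi_E^j\}$ of $O_E$ over $O_F$, by $\mathrm{res}(\nu_E)\big((a_{ij\ell})\big) = \nu_E\big(\sum_{i,j}a_{ij1}\xi^i\pi_E^j, \dots, \sum_{i,j}a_{ijr}\xi^i\pi_E^j\big)^{1/n}$. Then $D(\mathrm{res}(\nu_E)) = \mathfrak{d}(E/F)^{r/2} \cdot D(\nu_E)$ for every norm $\nu_E$ on $E^r$. -/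

import Mathlib

/-- An abstract (non-archimedean, multiplicative) absolute value on a field `F`. -/
structure NAAbs (F : Type*) [Field F] where
  abs : F → ℝ
  nonneg : ∀ a, 0 ≤ abs a
  eq_zero : ∀ a, abs a = 0 ↔ a = 0
  map_mul : ∀ a b, abs (a * b) = abs a * abs b
  ultra : ∀ a b, abs (a + b) ≤ max (abs a) (abs b)

/-- `F` together with `A` is a non-archimedean *local* field with uniformizer `π`:
the value group is discrete with generator `|π| < 1`, the residue field is finite,
and `F` is complete. -/
def NAAbs.IsLocal {F : Type*} [Field F] (A : NAAbs F) (π : F) : Prop :=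
  π ≠ 0 ∧ A.abs π < 1 ∧ (∀ a : F, A.abs a < 1 → A.abs a ≤ A.abs π) ∧
  (∃ S : Finset F, ∀ a : F, A.abs a ≤ 1 → ∃ s ∈ S, A.abs (a - s) < 1) ∧
  (∀ f : ℕ → F, (∀ ε : ℝ, 0 < ε → ∃ N, ∀ m ≥ N, ∀ n ≥ N, A.abs (f m - f n) < ε) →
    ∃ x : F, ∀ ε : ℝ, 0 < ε → ∃ N, ∀ n ≥ N, A.abs (f n - x) < ε)

/-- A non-archimedean norm on an `F`-vector space `V`, relative to the absolute value `A`. -/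
structure NANorm {F : Type*} [Field F] (A : NAAbs F)
    (V : Type*) [AddCommGroup V] [Module F V] where
  nu : V → ℝ
  nonneg : ∀ v, 0 ≤ nu v
  eq_zero : ∀ v, nu v = 0 ↔ v = 0
  smul_eq : ∀ (a : F) (v : V), nu (a • v) = A.abs a * nu v
  ultra : ∀ u v, nu (u + v) ≤ max (nu u) (nu v)

/-- `b` is an `O_F`-basis of the `O_F`-lattice `L ⊆ V`. -/
def IsLatticeBasis {F : Type*} [Field F] (A : NAAbs F)
    {V : Type*} [AddCommGroup V] [Module F V]
    {ι : Type*} [Fintype ι] (b : ι → V) (L : Set V) : Prop :=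
  LinearIndependent F b ∧
  ∀ v : V, v ∈ L ↔ ∃ c : ι → F, (∀ i, A.abs (c i) ≤ 1) ∧ v = ∑ i, c i • b i

/-- `b` is orthogonal with respect to the norm(-like function) `νn`. -/
def IsOrthogonalFor {F : Type*} [Field F] (A : NAAbs F)
    {V : Type*} [AddCommGroup V] [Module F V]
    {ι : Type*} [Fintype ι] (νn : V → ℝ) (b : ι → V) : Prop :=
  ∀ c : ι → F, νn (∑ i, c i • b i) = ⨆ i, νn (c i • b i)

section MyHelpers

variable {F : Type*} [Field F]

lemma NAAbs.abs_zero (A : NAAbs F) : A.abs 0 = 0 := (A.eq_zero 0).mpr rfl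

lemma NAAbs.abs_one (A : NAAbs F) : A.abs 1 = 1 := by
  have h := A.map_mul 1 1
  rw [one_mul] at h
  have h1 : A.abs 1 ≠ 0 := fun h0 => one_ne_zero ((A.eq_zero 1).mp h0)
  have : A.abs 1 * 1 = A.abs 1 * A.abs 1 := by linarith
  exact (mul_left_cancel₀ h1 this).symm

lemma NAAbs.abs_neg (A : NAAbs F) (a : F) : A.abs (-a) = A.abs a := by
  have hm : A.abs (-1 : F) * A.abs (-1 : F) = 1 := by
    rw [← A.map_mul]; simpa using A.abs_one
  have h1 : A.abs (-1 : F) = 1 := by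
    rcases mul_self_eq_one_iff.mp hm with h | h
    · exact h
    · have := A.nonneg (-1 : F); linarith
  calc A.abs (-a) = A.abs ((-1) * a) := by ring_nf
    _ = A.abs (-1:F) * A.abs a := A.map_mul _ _
    _ = A.abs a := by rw [h1, one_mul]

lemma NAAbs.abs_inv (A : NAAbs F) {a : F} (ha : a ≠ 0) : A.abs a⁻¹ = (A.abs a)⁻¹ := by
  exact eq_inv_of_mul_eq_one_left (by rw [← A.map_mul, inv_mul_cancel₀ ha, A.abs_one])

lemma NAAbs.abs_prod (A : NAAbs F) {ι : Type*} (s : Finset ι) (g : ι → F) :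
    A.abs (∏ i ∈ s, g i) = ∏ i ∈ s, A.abs (g i) := by
  classical
  induction s using Finset.induction_on with
  | empty => simpa using A.abs_one
  | insert a s hnot ih =>
                      rw [Finset.prod_insert hnot, Finset.prod_insert hnot, A.map_mul, ih]

variable {V : Type*} [AddCommGroup V]

lemma ultra_sum_le (ν : V → ℝ) (h0 : ν 0 = 0)
    (hu : ∀ u v, ν (u + v) ≤ max (ν u) (ν v))
    {ι : Type*} (s : Finset ι) (g : ι → V) {B : ℝ} (hB : 0 ≤ B)
    (hg : ∀ i ∈ s, ν (g i) ≤ B) : ν (∑ i ∈ s, g i) ≤ B := by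
  classical
  induction s using Finset.induction_on with
  | empty => simpa [h0] using hB
  | insert a s hnot ih =>
      rw [Finset.sum_insert hnot]
      exact le_trans (hu _ _) (max_le (hg a (Finset.mem_insert_self _ _))
        (ih fun i hi => hg i (Finset.mem_insert_of_mem hi)))

lemma ultra_add_eq (ν : V → ℝ)
    (hu : ∀ u v, ν (u + v) ≤ max (ν u) (ν v))
    (hneg : ∀ v, ν (-v) = ν v) {x y : V} (hlt : ν y < ν x) : ν (x + y) = ν x := by
  refine le_antisymm (le_trans (hu x y) (max_le le_rfl hlt.le)) ?_
  have h2 : ν x ≤ max (ν (x + y)) (ν (-y)) := by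
    have := hu (x + y) (-y)
    simpa using this
  rw [hneg] at h2
  rcases le_max_iff.mp h2 with h | h
  · exact h
  · linarith

lemma ultra_sum_eq_of_lt (ν : V → ℝ) (hnn : ∀ v, 0 ≤ ν v) (h0 : ν 0 = 0)
    (hu : ∀ u v, ν (u + v) ≤ max (ν u) (ν v)) (hneg : ∀ v, ν (-v) = ν v)
    {ι : Type*} (s : Finset ι) (g : ι → V) {i0 : ι} (hi0 : i0 ∈ s)
    (hlt : ∀ i ∈ s, i ≠ i0 → ν (g i) < ν (g i0)) :
    ν (∑ i ∈ s, g i) = ν (g i0) := by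
  classical
  rw [← Finset.add_sum_erase s g hi0]
  rcases (s.erase i0).eq_empty_or_nonempty with he | hne
  · rw [he]; simp
  · have hb : ν (∑ i ∈ s.erase i0, g i) ≤ (s.erase i0).sup' hne (fun i => ν (g i)) := by
      refine ultra_sum_le ν h0 hu (s.erase i0) g ?_
        (fun i hi => Finset.le_sup' (fun i => ν (g i)) hi)
      obtain ⟨i1, hi1⟩ := hne
      exact le_trans (hnn (g i1)) (Finset.le_sup' (fun i => ν (g i)) hi1)
    obtain ⟨i1, hi1, hs⟩ := Finset.exists_mem_eq_sup' hne (fun i => ν (g i))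
    have hlt2 : ν (∑ i ∈ s.erase i0, g i) < ν (g i0) := by
      rw [hs] at hb
      exact lt_of_le_of_lt hb (hlt i1 (Finset.mem_of_mem_erase hi1) (Finset.ne_of_mem_erase hi1))
    exact ultra_add_eq ν hu hneg hlt2

lemma ultra_sum_eq_sup' (ν : V → ℝ) (hnn : ∀ v, 0 ≤ ν v) (h0 : ν 0 = 0)
    (hz : ∀ v, ν v = 0 → v = 0)
    (hu : ∀ u v, ν (u + v) ≤ max (ν u) (ν v)) (hneg : ∀ v, ν (-v) = ν v)
    {ι : Type*} [Fintype ι] (hne : (Finset.univ : Finset ι).Nonempty) (g : ι → V)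
    (hdist : ∀ i j, i ≠ j → ν (g i) = ν (g j) → ν (g i) = 0) :
    ν (∑ i, g i) = Finset.univ.sup' hne (fun i => ν (g i)) := by
  obtain ⟨i0, hi0, hs⟩ := Finset.exists_mem_eq_sup' hne (fun i => ν (g i))
  rw [hs]
  by_cases hm : ν (g i0) = 0
  · have hall : ∀ i, g i = 0 := by
      intro i
      apply hz
      have h1 : ν (g i) ≤ ν (g i0) := hs ▸ Finset.le_sup' (fun i => ν (g i)) (Finset.mem_univ i)
      have h2 := hnn (g i)
      linarith [hm ▸ h1]
    rw [Finset.sum_eq_zero (fun i _ => hall i), h0, hm]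
  · refine ultra_sum_eq_of_lt ν hnn h0 hu hneg _ g (Finset.mem_univ i0) ?_
    intro i _ hi
    have h1 : ν (g i) ≤ ν (g i0) := hs ▸ Finset.le_sup' (fun i => ν (g i)) (Finset.mem_univ i)
    rcases lt_or_eq_of_le h1 with h | h
    · exact h
    · exact absurd (hdist i i0 hi h) (by rw [h]; exact hm)

lemma sup'_mul_right {ι : Type*} {s : Finset ι} (hne : s.Nonempty) (f : ι → ℝ)
    {c : ℝ} (hc : 0 ≤ c) : s.sup' hne f * c = s.sup' hne (fun i => f i * c) := by
  obtain ⟨i0, hi0, h⟩ := Finset.exists_mem_eq_sup' hne f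
  refine le_antisymm ?_ (Finset.sup'_le _ _ fun i hi =>
    mul_le_mul_of_nonneg_right (Finset.le_sup' f hi) hc)
  rw [h]
  exact Finset.le_sup' (fun i => f i * c) hi0

lemma sup'_rpow {ι : Type*} {s : Finset ι} (hne : s.Nonempty) (f : ι → ℝ)
    (hf : ∀ i ∈ s, 0 ≤ f i) {c : ℝ} (hc : 0 ≤ c) :
    s.sup' hne f ^ c = s.sup' hne (fun i => f i ^ c) := by
  obtain ⟨i0, hi0, h⟩ := Finset.exists_mem_eq_sup' hne f
  refine le_antisymm ?_ (Finset.sup'_le _ _ fun i hi =>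
    Real.rpow_le_rpow (hf i hi) (Finset.le_sup' f hi) hc)
  rw [h]
  exact Finset.le_sup' (fun i => f i ^ c) hi0

end MyHelpers

section Invariance

variable {F : Type*} [Field F] {V : Type*} [AddCommGroup V] [Module F V]

lemma IsLatticeBasis.comp_equiv {A : NAAbs F} {ι κ : Type*} [Fintype ι] [Fintype κ]
    {b : ι → V} {L : Set V} (hb : IsLatticeBasis A b L) (σ : κ ≃ ι) :
    IsLatticeBasis A (b ∘ σ) L := by
  constructor
  · exact hb.1.comp σ σ.injective
  · intro v
    rw [hb.2 v]
    constructor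
    · rintro ⟨c, hc, rfl⟩
      exact ⟨c ∘ σ, fun i => hc _, by rw [← σ.sum_comp (fun i => c i • b i)]; rfl⟩
    · rintro ⟨c, hc, rfl⟩
      refine ⟨c ∘ σ.symm, fun i => hc _, ?_⟩
      rw [← σ.sum_comp (fun i => (c ∘ σ.symm) i • b i)]
      simp

lemma IsOrthogonalFor.comp_equiv {A : NAAbs F} {ι κ : Type*} [Fintype ι] [Fintype κ]
    {b : ι → V} {νn : V → ℝ} (hb : IsOrthogonalFor A νn b) (σ : κ ≃ ι) :
    IsOrthogonalFor A νn (b ∘ σ) := by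
  intro c
  have h1 : ∑ i, c i • (b ∘ σ) i = ∑ i, (c ∘ σ.symm) i • b i := by
    rw [← σ.sum_comp (fun i => (c ∘ σ.symm) i • b i)]
    simp
  rw [h1, hb (c ∘ σ.symm), ← σ.iSup_comp (g := fun i => νn ((c ∘ σ.symm) i • b i))]
  simp

lemma prod_orthogonal_eq {A : NAAbs F} {ι : Type*} [Fintype ι] [DecidableEq ι]
    (μ : V → ℝ) (hμ0 : ∀ v, 0 ≤ μ v)
    (hsmul : ∀ (a : F) (v : V), μ (a • v) = A.abs a * μ v)
    {L : Set V} {b b' : ι → V}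
    (hb : IsLatticeBasis A b L) (hb' : IsLatticeBasis A b' L)
    (hob : IsOrthogonalFor A μ b) (hob' : IsOrthogonalFor A μ b') :
    ∏ i, μ (b i) = ∏ i, μ (b' i) := by
  classical
  -- each basis vector lies in L
  have hmem : ∀ (c : ι → V), (∀ v, v ∈ L ↔ ∃ g : ι → F, (∀ i, A.abs (g i) ≤ 1) ∧
      v = ∑ i, g i • c i) → ∀ i, c i ∈ L := by
    intro c hL i
    rw [hL (c i)]
    refine ⟨fun j => if j = i then 1 else 0, fun j => ?_, ?_⟩
    · by_cases h : j = i <;> simp [h, A.abs_one, A.abs_zero]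
    · rw [Finset.sum_eq_single i (fun j _ hj => by simp [hj]) (by simp)]
      simp
  -- transition matrices
  have hMex : ∀ i, ∃ c : ι → F, (∀ j, A.abs (c j) ≤ 1) ∧ b' i = ∑ j, c j • b j :=
    fun i => (hb.2 (b' i)).mp (hmem b' (fun v => hb'.2 v) i)
  have hNex : ∀ i, ∃ c : ι → F, (∀ j, A.abs (c j) ≤ 1) ∧ b i = ∑ j, c j • b' j :=
    fun i => (hb'.2 (b i)).mp (hmem b (fun v => hb.2 v) i)
  set M : Matrix ι ι F := fun i j => (hMex i).choose j with hM
  set N : Matrix ι ι F := fun i j => (hNex i).choose j with hN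
  have hMle : ∀ i j, A.abs (M i j) ≤ 1 := fun i j => (hMex i).choose_spec.1 j
  have hNle : ∀ i j, A.abs (N i j) ≤ 1 := fun i j => (hNex i).choose_spec.1 j
  have hMb : ∀ i, b' i = ∑ j, M i j • b j := fun i => (hMex i).choose_spec.2
  have hNb : ∀ i, b i = ∑ j, N i j • b' j := fun i => (hNex i).choose_spec.2
  -- M * N = 1
  have hMN : M * N = 1 := by
    have key : ∀ i, ∑ k, ((M * N) i k - (1 : Matrix ι ι F) i k) • b' k = 0 := by
      intro i
      have h1 : b' i = ∑ k, (M * N) i k • b' k := by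
        calc b' i = ∑ j, M i j • b j := hMb i
          _ = ∑ j, M i j • (∑ k, N j k • b' k) := by
                refine Finset.sum_congr rfl fun j _ => by rw [← hNb j]
          _ = ∑ j, ∑ k, (M i j * N j k) • b' k := by
                refine Finset.sum_congr rfl fun j _ => by
                  rw [Finset.smul_sum]
                  exact Finset.sum_congr rfl fun k _ => smul_smul _ _ _
          _ = ∑ k, ∑ j, (M i j * N j k) • b' k := Finset.sum_comm
          _ = ∑ k, (M * N) i k • b' k := by
                refine Finset.sum_congr rfl fun k _ => ?_
                rw [Matrix.mul_apply, Finset.sum_smul]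
      have h2 : b' i = ∑ k, (1 : Matrix ι ι F) i k • b' k := by
        rw [Finset.sum_eq_single i (fun k _ hk => by simp [Matrix.one_apply, Ne.symm hk])
          (by simp)]
        simp [Matrix.one_apply]
      calc ∑ k, ((M * N) i k - (1 : Matrix ι ι F) i k) • b' k
          = ∑ k, ((M * N) i k • b' k - (1 : Matrix ι ι F) i k • b' k) := by
            refine Finset.sum_congr rfl fun k _ => sub_smul _ _ _
        _ = (∑ k, (M * N) i k • b' k) - ∑ k, (1 : Matrix ι ι F) i k • b' k :=
            Finset.sum_sub_distrib _ _
        _ = 0 := by rw [← h1, ← h2, sub_self]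
    ext i k
    exact sub_eq_zero.mp (Fintype.linearIndependent_iff.mp hb'.1 _ (key i) k)
  -- |det M| = |det N| = 1
  have hdet1 : A.abs M.det * A.abs N.det = 1 := by
    rw [← A.map_mul, ← Matrix.det_mul, hMN, Matrix.det_one, A.abs_one]
  have habsdet : ∀ (P : Matrix ι ι F), (∀ i j, A.abs (P i j) ≤ 1) → A.abs P.det ≤ 1 := by
    intro P hP
    rw [Matrix.det_apply]
    refine ultra_sum_le A.abs A.abs_zero A.ultra _ _ zero_le_one ?_
    intro σ _
    have hterm : A.abs (Equiv.Perm.sign σ • ∏ i, P (σ i) i) = A.abs (∏ i, P (σ i) i) := by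
      rcases Int.units_eq_one_or (Equiv.Perm.sign σ) with h | h
      · rw [h]; simp
      · rw [h]
        have : (-1 : ℤˣ) • (∏ i, P (σ i) i) = -(∏ i, P (σ i) i) := by
          rw [Units.smul_def]; simp
        rw [this, A.abs_neg]
    rw [hterm, A.abs_prod]
    refine Finset.prod_le_one (fun i _ => A.nonneg _) (fun i _ => hP _ _)
  have hMdet : A.abs M.det = 1 := by
    have h1 := habsdet M hMle
    have h2 := habsdet N hNle
    have h3 := A.nonneg M.det
    have h4 := A.nonneg N.det
    nlinarith
  -- key one-sided inequality
  have key : ∀ (P : Matrix ι ι F) (c d : ι → V), (∀ i j, A.abs (P i j) ≤ 1) →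
      (∀ i, d i = ∑ j, P i j • c j) → A.abs P.det = 1 →
      IsOrthogonalFor A μ c → ∏ i, μ (c i) ≤ ∏ i, μ (d i) := by
    intro P c d hPle hPd hPdet hoc
    -- find permutation with product of abs entries ≥ 1
    have hperm : ∃ σ : Equiv.Perm ι, 1 ≤ ∏ i, A.abs (P (σ i) i) := by
      have hne : (Finset.univ : Finset (Equiv.Perm ι)).Nonempty := Finset.univ_nonempty
      have hle : A.abs P.det ≤ Finset.univ.sup' hne
          (fun σ : Equiv.Perm ι => ∏ i, A.abs (P (σ i) i)) := by
        rw [Matrix.det_apply]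
        refine ultra_sum_le A.abs A.abs_zero A.ultra _ _ ?_ ?_
        · obtain ⟨σ, hσ⟩ := hne
          exact le_trans (Finset.prod_nonneg fun i _ => A.nonneg _)
            (Finset.le_sup' (fun σ : Equiv.Perm ι => ∏ i, A.abs (P (σ i) i)) hσ)
        · intro σ _
          have hterm : A.abs (Equiv.Perm.sign σ • ∏ i, P (σ i) i)
              = ∏ i, A.abs (P (σ i) i) := by
            rcases Int.units_eq_one_or (Equiv.Perm.sign σ) with h | h
            · rw [h]; simp [A.abs_prod]
            · rw [h]
              have : (-1 : ℤˣ) • (∏ i, P (σ i) i) = -(∏ i, P (σ i) i) := by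
                rw [Units.smul_def]; simp
              rw [this, A.abs_neg, A.abs_prod]
          rw [hterm]
          exact Finset.le_sup' (fun σ : Equiv.Perm ι => ∏ i, A.abs (P (σ i) i))
            (Finset.mem_univ σ)
      rw [hPdet] at hle
      obtain ⟨σ, _, hσ⟩ := Finset.exists_mem_eq_sup' hne
        (fun σ : Equiv.Perm ι => ∏ i, A.abs (P (σ i) i))
      exact ⟨σ, by rw [← hσ]; exact hle⟩
    obtain ⟨σ, hσ⟩ := hperm
    have hstep : ∀ i, A.abs (P (σ i) i) * μ (c i) ≤ μ (d (σ i)) := by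
      intro i
      rw [hPd (σ i), hoc (fun j => P (σ i) j)]
      have hbdd : BddAbove (Set.range fun j => μ (P (σ i) j • c j)) :=
        Set.Finite.bddAbove (Set.finite_range _)
      calc A.abs (P (σ i) i) * μ (c i) = μ (P (σ i) i • c i) := (hsmul _ _).symm
        _ ≤ ⨆ j, μ (P (σ i) j • c j) := le_ciSup hbdd i
    calc ∏ i, μ (c i) = 1 * ∏ i, μ (c i) := (one_mul _).symm
      _ ≤ (∏ i, A.abs (P (σ i) i)) * ∏ i, μ (c i) :=
          mul_le_mul_of_nonneg_right hσ (Finset.prod_nonneg fun i _ => hμ0 _)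
      _ = ∏ i, A.abs (P (σ i) i) * μ (c i) := (Finset.prod_mul_distrib).symm
      _ ≤ ∏ i, μ (d (σ i)) := Finset.prod_le_prod
          (fun i _ => mul_nonneg (A.nonneg _) (hμ0 _)) (fun i _ => hstep i)
      _ = ∏ i, μ (d i) := Equiv.prod_comp σ (fun i => μ (d i))
  have hNdet : A.abs N.det = 1 := by
    have h3 := A.nonneg N.det
    nlinarith [hdet1, hMdet]
  exact le_antisymm (key M b b' hMle hMb hMdet hob) (key N b' b hNle hNb hNdet hob')

end Invariance

section ValFormula

variable {F E : Type*} [Field F] [Field E] [Algebra F E]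

lemma abs_one_of (abs : E → ℝ) (hz : ∀ x : E, abs x = 0 ↔ x = 0)
    (hm : ∀ x y, abs (x * y) = abs x * abs y) : abs 1 = 1 := by
  have h := hm 1 1
  rw [one_mul] at h
  have h1 : abs 1 ≠ 0 := fun h0 => one_ne_zero (hz 1 |>.mp h0)
  have : abs 1 * 1 = abs 1 * abs 1 := by linarith
  exact (mul_left_cancel₀ h1 this).symm

lemma abs_neg_of (abs : E → ℝ) (h0 : ∀ x : E, 0 ≤ abs x)
    (hz : ∀ x : E, abs x = 0 ↔ x = 0)
    (hm : ∀ x y, abs (x * y) = abs x * abs y) (a : E) : abs (-a) = abs a := by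
  have hmm : abs (-1 : E) * abs (-1 : E) = 1 := by
    rw [← hm]; simpa using abs_one_of abs hz hm
  have h1 : abs (-1 : E) = 1 := by
    rcases mul_self_eq_one_iff.mp hmm with h | h
    · exact h
    · have := h0 (-1 : E); linarith
  calc abs (-a) = abs ((-1) * a) := by ring_nf
    _ = abs (-1 : E) * abs a := hm _ _
    _ = abs a := by rw [h1, one_mul]

lemma abs_pow_of (abs : E → ℝ) (hz : ∀ x : E, abs x = 0 ↔ x = 0)
    (hm : ∀ x y, abs (x * y) = abs x * abs y) (a : E) (k : ℕ) :
    abs (a ^ k) = abs a ^ k := by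
  induction k with
  | zero => simpa using abs_one_of abs hz hm
  | succ n ih => rw [pow_succ, pow_succ, hm, ih]

lemma rowFormula (A : NAAbs F) (absE : E → ℝ) (ξ : E) {f : ℕ}
    (hEz : ∀ x : E, absE x = 0 ↔ x = 0)
    (hEmul : ∀ x y, absE (x * y) = absE x * absE y)
    (hext : ∀ a : F, absE (algebraMap F E a) = A.abs a)
    (hres : ∀ c : Fin f → F, (∀ i, A.abs (c i) ≤ 1) → (∃ i, A.abs (c i) = 1) →
      absE (∑ i, algebraMap F E (c i) * ξ ^ (i : ℕ)) = 1)
    (hne : (Finset.univ : Finset (Fin f)).Nonempty)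
    (c : Fin f → F) :
    absE (∑ i, algebraMap F E (c i) * ξ ^ (i : ℕ))
      = Finset.univ.sup' hne (fun i => A.abs (c i)) := by
  obtain ⟨i0, _, hs⟩ := Finset.exists_mem_eq_sup' hne (fun i => A.abs (c i))
  rw [hs]
  by_cases hm : A.abs (c i0) = 0
  · have hall : ∀ i, c i = 0 := by
      intro i
      apply (A.eq_zero _).mp
      have h1 : A.abs (c i) ≤ A.abs (c i0) := hs ▸ Finset.le_sup' (fun i => A.abs (c i))
        (Finset.mem_univ i)
      have h2 := A.nonneg (c i)
      linarith
    rw [Finset.sum_eq_zero (fun i _ => by rw [hall i, map_zero, zero_mul]), (hEz 0).mpr rfl, hm]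
  · have hc0 : c i0 ≠ 0 := fun h => hm (by rw [h, A.abs_zero])
    set d : Fin f → F := fun i => c i * (c i0)⁻¹ with hd
    have habsd : ∀ i, A.abs (d i) = A.abs (c i) * (A.abs (c i0))⁻¹ := fun i => by
      rw [hd]; dsimp only; rw [A.map_mul, A.abs_inv hc0]
    have hci0pos : 0 < A.abs (c i0) := lt_of_le_of_ne (A.nonneg _) (Ne.symm hm)
    have hd1 : ∀ i, A.abs (d i) ≤ 1 := by
      intro i
      rw [habsd i]
      have h1 : A.abs (c i) ≤ A.abs (c i0) := hs ▸ Finset.le_sup' (fun i => A.abs (c i))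
        (Finset.mem_univ i)
      rw [← div_eq_mul_inv]
      exact (div_le_one hci0pos).mpr h1
    have hdi0 : A.abs (d i0) = 1 := by
      rw [habsd i0, mul_inv_cancel₀ hm]
    have hsum : ∑ i, algebraMap F E (c i) * ξ ^ (i : ℕ)
        = algebraMap F E (c i0) * ∑ i, algebraMap F E (d i) * ξ ^ (i : ℕ) := by
      rw [Finset.mul_sum]
      refine Finset.sum_congr rfl fun i _ => ?_
      rw [← mul_assoc, ← map_mul]
      congr 2
      rw [hd]; dsimp only; field_simp
    rw [hsum, hEmul, hext, hres d hd1 ⟨i0, hdi0⟩, mul_one]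

lemma coefBound (A : NAAbs F) {q : ℝ} (hq : 1 < q)
    (hdisc : ∀ a : F, a ≠ 0 → ∃ z : ℤ, A.abs a = q ^ z)
    {j e : ℕ} (hj : j < e) (he : 0 < e) {a : F}
    (h : A.abs a * q ^ (-(j : ℝ) / (e : ℝ)) ≤ 1) : A.abs a ≤ 1 := by
  have hq0 : (0 : ℝ) < q := lt_trans one_pos hq
  by_cases ha : a = 0
  · rw [ha, A.abs_zero]; exact zero_le_one
  · obtain ⟨z, hz⟩ := hdisc a ha
    rw [hz] at h ⊢
    rw [← Real.rpow_intCast q z] at h ⊢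
    rw [← Real.rpow_add hq0] at h
    have h1 : q ^ ((z : ℝ) + -(j : ℝ) / (e : ℝ)) ≤ q ^ (0 : ℝ) := by
      rw [Real.rpow_zero]; exact h
    have h2 : (z : ℝ) + -(j : ℝ) / (e : ℝ) ≤ 0 := (Real.rpow_le_rpow_left_iff hq).mp h1
    have he' : (0 : ℝ) < (e : ℝ) := Nat.cast_pos.mpr he
    have hje : (j : ℝ) / (e : ℝ) < 1 := by
      rw [div_lt_one he']
      exact_mod_cast hj
    have hz1 : (z : ℝ) < 1 := by
      have hnd : -(j : ℝ) / (e : ℝ) = -((j : ℝ) / (e : ℝ)) := neg_div _ _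
      rw [hnd] at h2
      linarith
    have hz0 : z ≤ 0 := by
      by_contra hcon
      push_neg at hcon
      have : (1 : ℝ) ≤ (z : ℝ) := by exact_mod_cast hcon
      linarith
    calc q ^ (z : ℝ) ≤ q ^ (0 : ℝ) :=
          (Real.rpow_le_rpow_left_iff hq).mpr (by exact_mod_cast hz0)
      _ = 1 := Real.rpow_zero q

lemma valFormula (A : NAAbs F) {q : ℝ} (hq : 1 < q)
    (hdisc : ∀ a : F, a ≠ 0 → ∃ z : ℤ, A.abs a = q ^ z)
    (absE : E → ℝ)
    (hE0 : ∀ x, 0 ≤ absE x) (hEz : ∀ x, absE x = 0 ↔ x = 0)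
    (hEmul : ∀ x y, absE (x * y) = absE x * absE y)
    (hEultra : ∀ x y, absE (x + y) ≤ max (absE x) (absE y))
    (hext : ∀ a : F, absE (algebraMap F E a) = A.abs a)
    {e f : ℕ} (he : 0 < e) (hf : 0 < f)
    (πE : E) (hπE : absE πE = q ^ (-(1 : ℝ) / (e : ℝ)))
    (ξ : E)
    (hres : ∀ c : Fin f → F, (∀ i, A.abs (c i) ≤ 1) → (∃ i, A.abs (c i) = 1) →
      absE (∑ i, algebraMap F E (c i) * ξ ^ (i : ℕ)) = 1)
    (hnef : (Finset.univ : Finset (Fin f)).Nonempty)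
    (hnee : (Finset.univ : Finset (Fin e)).Nonempty)
    (c : Fin f → Fin e → F) :
    absE (∑ i, ∑ j, algebraMap F E (c i j) * ξ ^ (i : ℕ) * πE ^ (j : ℕ))
      = Finset.univ.sup' hnee (fun j : Fin e =>
          Finset.univ.sup' hnef (fun i => A.abs (c i j)) * q ^ (-((j : ℕ) : ℝ) / (e : ℝ))) := by
  have hq0 : (0 : ℝ) < q := lt_trans one_pos hq
  have habsπ : ∀ j : ℕ, absE (πE ^ j) = q ^ (-(j : ℝ) / (e : ℝ)) := by
    intro j
    rw [abs_pow_of absE hEz hEmul, hπE, ← Real.rpow_natCast (q ^ (-(1:ℝ)/(e:ℝ))) j,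
      ← Real.rpow_mul hq0.le]
    congr 1
    ring
  rw [Finset.sum_comm]
  have hswap : ∀ j : Fin e, ∑ i, algebraMap F E (c i j) * ξ ^ (i : ℕ) * πE ^ (j : ℕ)
      = (∑ i, algebraMap F E (c i j) * ξ ^ (i : ℕ)) * πE ^ (j : ℕ) :=
    fun j => (Finset.sum_mul _ _ _).symm
  have hval : ∀ j : Fin e,
      absE ((∑ i, algebraMap F E (c i j) * ξ ^ (i : ℕ)) * πE ^ (j : ℕ))
        = Finset.univ.sup' hnef (fun i => A.abs (c i j)) * q ^ (-((j : ℕ) : ℝ) / (e : ℝ)) := by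
    intro j
    rw [hEmul, rowFormula A absE ξ hEz hEmul hext hres hnef, habsπ]
  calc absE (∑ j, ∑ i, algebraMap F E (c i j) * ξ ^ (i : ℕ) * πE ^ (j : ℕ))
      = absE (∑ j, (∑ i, algebraMap F E (c i j) * ξ ^ (i : ℕ)) * πE ^ (j : ℕ)) := by
        rw [Finset.sum_congr rfl fun j _ => hswap j]
    _ = Finset.univ.sup' hnee (fun j : Fin e =>
          absE ((∑ i, algebraMap F E (c i j) * ξ ^ (i : ℕ)) * πE ^ (j : ℕ))) := by
        refine ultra_sum_eq_sup' absE hE0 ((hEz 0).mpr rfl) (fun v hv => (hEz v).mp hv)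
          hEultra (abs_neg_of absE hE0 hEz hEmul) hnee _ ?_
        intro j j' hjj' heq
        by_contra hne0
        rw [hval j, hval j'] at heq
        rw [hval j] at hne0
        set mj := Finset.univ.sup' hnef (fun i => A.abs (c i j)) with hmj
        set mj' := Finset.univ.sup' hnef (fun i => A.abs (c i j')) with hmj'
        have hqpow : ∀ t : ℝ, (0:ℝ) < q ^ t := fun t => Real.rpow_pos_of_pos hq0 t
        have hmjne : mj ≠ 0 := fun h => hne0 (by rw [h, zero_mul])
        have hmj'ne : mj' ≠ 0 := by
          intro h
          rw [h, zero_mul] at heq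
          exact hne0 heq
        -- get integer exponents
        have hget : ∀ (jj : Fin e), Finset.univ.sup' hnef (fun i => A.abs (c i jj)) ≠ 0 →
            ∃ z : ℤ, Finset.univ.sup' hnef (fun i => A.abs (c i jj)) = q ^ z := by
          intro jj hne'
          obtain ⟨i0, _, hs⟩ := Finset.exists_mem_eq_sup' hnef (fun i => A.abs (c i jj))
          have : c i0 jj ≠ 0 := by
            intro h
            exact hne' (by rw [hs, h, A.abs_zero])
          obtain ⟨z, hz⟩ := hdisc _ this
          exact ⟨z, by rw [hs, hz]⟩
        obtain ⟨z, hz⟩ := hget j hmjne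
        obtain ⟨z', hz'⟩ := hget j' hmj'ne
        rw [← hmj] at hz
        rw [← hmj'] at hz'
        rw [hz, hz', ← Real.rpow_intCast q z, ← Real.rpow_intCast q z',
          ← Real.rpow_add hq0, ← Real.rpow_add hq0] at heq
        have hexp : (z : ℝ) + -((j : ℕ) : ℝ) / (e : ℝ) = (z' : ℝ) + -((j' : ℕ) : ℝ) / (e : ℝ) :=
          le_antisymm ((Real.rpow_le_rpow_left_iff hq).mp heq.le)
            ((Real.rpow_le_rpow_left_iff hq).mp heq.ge)
        have he' : (0 : ℝ) < (e : ℝ) := Nat.cast_pos.mpr he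
        have hb1 : (0:ℝ) ≤ ((j : ℕ) : ℝ) / (e : ℝ) :=
          div_nonneg (Nat.cast_nonneg _) he'.le
        have hb2 : ((j : ℕ) : ℝ) / (e : ℝ) < 1 := by
          rw [div_lt_one he']; exact_mod_cast j.isLt
        have hb3 : (0:ℝ) ≤ ((j' : ℕ) : ℝ) / (e : ℝ) :=
          div_nonneg (Nat.cast_nonneg _) he'.le
        have hb4 : ((j' : ℕ) : ℝ) / (e : ℝ) < 1 := by
          rw [div_lt_one he']; exact_mod_cast j'.isLt
        rw [neg_div, neg_div] at hexp
        have hcast : ((z - z' : ℤ) : ℝ) = ((j : ℕ) : ℝ) / (e : ℝ) - ((j' : ℕ) : ℝ) / (e : ℝ) := by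
          push_cast
          linarith [hexp]
        have hzz' : z = z' := by
          by_contra hcon
          have h1 : (1 : ℤ) ≤ |z - z'| := Int.one_le_abs (sub_ne_zero.mpr hcon)
          have h2 : (1 : ℝ) ≤ |((z - z' : ℤ) : ℝ)| := by
            rw [← Int.cast_abs]
            exact_mod_cast h1
          rw [hcast] at h2
          have habs : |((j : ℕ) : ℝ) / (e : ℝ) - ((j' : ℕ) : ℝ) / (e : ℝ)| < 1 :=
            abs_lt.mpr ⟨by linarith, by linarith⟩
          linarith
        have hd0 : ((j : ℕ) : ℝ) / (e : ℝ) - ((j' : ℕ) : ℝ) / (e : ℝ) = 0 := by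
          rw [hzz'] at hcast
          simpa using hcast.symm
        have he' : ((e : ℝ)) ≠ 0 := (Nat.cast_pos.mpr he).ne'
        have hjeq : ((j : ℕ) : ℝ) = ((j' : ℕ) : ℝ) := by
          field_simp at hd0
          linarith
        exact hjj' (Fin.ext (by exact_mod_cast hjeq))
    _ = Finset.univ.sup' hnee (fun j : Fin e =>
          Finset.univ.sup' hnef (fun i => A.abs (c i j)) * q ^ (-((j : ℕ) : ℝ) / (e : ℝ))) := by
        exact Finset.sup'_congr hnee rfl fun j _ => hval j

end ValFormula

section MoreHelpers

lemma sup'_prod3 {α β γ : Type*} [Fintype α] [Fintype β] [Fintype γ]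
    [Nonempty α] [Nonempty β] [Nonempty γ] (g : α × β × γ → ℝ) :
    Finset.univ.sup' Finset.univ_nonempty (fun c0 : γ =>
      Finset.univ.sup' Finset.univ_nonempty (fun b0 : β =>
        Finset.univ.sup' Finset.univ_nonempty (fun a0 : α => g (a0, b0, c0))))
      = Finset.univ.sup' Finset.univ_nonempty g := by
  apply le_antisymm
  · refine Finset.sup'_le _ _ fun c0 _ => Finset.sup'_le _ _ fun b0 _ =>
      Finset.sup'_le _ _ fun a0 _ => Finset.le_sup' g (Finset.mem_univ (a0, b0, c0))
  · refine Finset.sup'_le _ _ fun p _ => ?_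
    calc g p = g (p.1, p.2.1, p.2.2) := by rfl
      _ ≤ Finset.univ.sup' Finset.univ_nonempty (fun a0 : α => g (a0, p.2.1, p.2.2)) :=
          Finset.le_sup' (fun a0 : α => g (a0, p.2.1, p.2.2)) (Finset.mem_univ p.1)
      _ ≤ Finset.univ.sup' Finset.univ_nonempty (fun b0 : β =>
            Finset.univ.sup' Finset.univ_nonempty (fun a0 : α => g (a0, b0, p.2.2))) :=
          Finset.le_sup' (fun b0 : β => Finset.univ.sup' Finset.univ_nonempty
            (fun a0 : α => g (a0, b0, p.2.2))) (Finset.mem_univ p.2.1)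
      _ ≤ _ := Finset.le_sup' (fun c0 : γ => Finset.univ.sup' Finset.univ_nonempty
            (fun b0 : β => Finset.univ.sup' Finset.univ_nonempty
              (fun a0 : α => g (a0, b0, c0)))) (Finset.mem_univ p.2.2)

lemma rpow_sum_helper {q : ℝ} (hq0 : 0 < q) {ι : Type*} (s : Finset ι) (g : ι → ℝ) :
    q ^ (∑ i ∈ s, g i) = ∏ i ∈ s, q ^ (g i) := by
  classical
  induction s using Finset.induction_on with
  | empty => simp
  | insert a s hnot ih =>
      rw [Finset.sum_insert hnot, Finset.prod_insert hnot, Real.rpow_add hq0, ih]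

end MoreHelpers

set_option maxHeartbeats 1000000

/-- The lattice discriminant of the restriction of scalars
`res(ν_E)` (a norm on `F^{nr}` defined via the orthogonal basis `ξ^i π_E^j` of
`O_E` over `O_F` and the `n`-th root) satisfies
`D(res(ν_E)) = 𝔡(E/F)^{r/2} · D(ν_E)`, where `𝔡(E/F) = |π_F|^{f(e-1)} = q^{-f(e-1)}`. -/
theorem statement8 {F E : Type*} [Field F] [Field E] [Algebra F E]
    (A : NAAbs F) (πF : F) (hloc : A.IsLocal πF)
    (q : ℝ) (hq : 1 < q) (hπF : A.abs πF = q⁻¹)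
    (hdisc : ∀ a : F, a ≠ 0 → ∃ z : ℤ, A.abs a = q ^ z)
    (absE : E → ℝ)
    (hE0 : ∀ x, 0 ≤ absE x) (hEz : ∀ x, absE x = 0 ↔ x = 0)
    (hEmul : ∀ x y, absE (x * y) = absE x * absE y)
    (hEultra : ∀ x y, absE (x + y) ≤ max (absE x) (absE y))
    (hext : ∀ a : F, absE (algebraMap F E a) = A.abs a)
    (e f : ℕ) (he : 0 < e) (hf : 0 < f)
    (hdeg : Module.finrank F E = e * f)
    (πE : E) (hπE : absE πE = q ^ (-(1 : ℝ) / (e : ℝ)))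
    (ξ : E) (hξ : absE ξ = 1)
    (hres : ∀ c : Fin f → F, (∀ i, A.abs (c i) ≤ 1) → (∃ i, A.abs (c i) = 1) →
      absE (∑ i, algebraMap F E (c i) * ξ ^ (i : ℕ)) = 1)
    -- the *normalized* absolute value of `E` is `|·|_E = |·|_F^n`
    (AE : NAAbs E) (hAE : ∀ x, AE.abs x = absE x ^ (e * f))
    (r : ℕ) (hr : 0 < r)
    (νE : NANorm AE (Fin r → E))
    (uE : Fin r → (Fin r → E))
    (huE : IsLatticeBasis AE uE {v : Fin r → E | ∀ ℓ, absE (v ℓ) ≤ 1})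
    (huEo : IsOrthogonalFor AE νE.nu uE)
    (wF : Fin (e * f * r) → ((Fin f × Fin e × Fin r) → F))
    (hwF : IsLatticeBasis A wF {x : (Fin f × Fin e × Fin r) → F | ∀ p, A.abs (x p) ≤ 1})
    (hwFo : IsOrthogonalFor A
      (fun x : (Fin f × Fin e × Fin r) → F =>
        (νE.nu (fun ℓ => ∑ i, ∑ j, algebraMap F E (x (i, j, ℓ)) * ξ ^ (i : ℕ) * πE ^ (j : ℕ)))
          ^ (((e * f : ℕ) : ℝ))⁻¹) wF) :
    ∏ p, (νE.nu (fun ℓ => ∑ i, ∑ j,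
          algebraMap F E (wF p (i, j, ℓ)) * ξ ^ (i : ℕ) * πE ^ (j : ℕ)))
        ^ (((e * f : ℕ) : ℝ))⁻¹
      = (q ^ (-((f * (e - 1) : ℕ) : ℝ))) ^ ((r : ℝ) / 2) * ∏ ℓ, νE.nu (uE ℓ) := by

  classical
  haveI : Nonempty (Fin f) := Fin.pos_iff_nonempty.mp hf
  haveI : Nonempty (Fin e) := Fin.pos_iff_nonempty.mp he
  haveI : Nonempty (Fin r) := Fin.pos_iff_nonempty.mp hr
  have hq0 : (0 : ℝ) < q := lt_trans one_pos hq
  have hn0 : 0 < e * f := Nat.mul_pos he hf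
  have hnR : (((e * f : ℕ) : ℝ)) ≠ 0 := Nat.cast_ne_zero.mpr hn0.ne'
  have hnef : (Finset.univ : Finset (Fin f)).Nonempty := Finset.univ_nonempty
  have hnee : (Finset.univ : Finset (Fin e)).Nonempty := Finset.univ_nonempty
  have hner : (Finset.univ : Finset (Fin r)).Nonempty := Finset.univ_nonempty
  have hval := valFormula A hq hdisc absE hE0 hEz hEmul hEultra hext he hf πE hπE ξ hres
    hnef hnee
  have habsπ : ∀ j : ℕ, absE (πE ^ j) = q ^ (-(j : ℝ) / (e : ℝ)) := by
    intro j
    rw [abs_pow_of absE hEz hEmul, hπE, ← Real.rpow_natCast (q ^ (-(1:ℝ)/(e:ℝ))) j,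
      ← Real.rpow_mul hq0.le]
    congr 1
    ring
  have hqpow : ∀ t : ℝ, (0:ℝ) < q ^ t := fun t => Real.rpow_pos_of_pos hq0 t
  have hqpowle : ∀ j : Fin e, q ^ (-((j:ℕ):ℝ) / (e:ℝ)) ≤ 1 := by
    intro j
    apply Real.rpow_le_one_of_one_le_of_nonpos hq.le
    apply div_nonpos_of_nonpos_of_nonneg <;> simp
  -- coefficient extraction lemmas
  have hcoef0 : ∀ c : Fin f → Fin e → F,
      (∑ i, ∑ j, algebraMap F E (c i j) * ξ ^ (i:ℕ) * πE ^ (j:ℕ)) = 0 → ∀ i j, c i j = 0 := by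
    intro c h i j
    have h0 := hval c
    rw [h, (hEz 0).mpr rfl] at h0
    have h1 : A.abs (c i j) * q ^ (-((j:ℕ):ℝ) / (e:ℝ)) ≤ 0 := by
      calc A.abs (c i j) * q ^ (-((j:ℕ):ℝ) / (e:ℝ))
          ≤ (Finset.univ.sup' hnef fun i => A.abs (c i j)) * q ^ (-((j:ℕ):ℝ) / (e:ℝ)) :=
            mul_le_mul_of_nonneg_right
              (Finset.le_sup' (fun i => A.abs (c i j)) (Finset.mem_univ i)) (hqpow _).le
        _ ≤ _ := Finset.le_sup' (fun j : Fin e =>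
            (Finset.univ.sup' hnef fun i => A.abs (c i j)) * q ^ (-((j:ℕ):ℝ) / (e:ℝ)))
            (Finset.mem_univ j)
        _ = 0 := h0.symm
    have h2 := A.nonneg (c i j)
    have h3 : A.abs (c i j) = 0 := by nlinarith [hqpow (-((j:ℕ):ℝ) / (e:ℝ))]
    exact (A.eq_zero _).mp h3
  have hmemE : ∀ c : Fin f → Fin e → F, (∀ i j, A.abs (c i j) ≤ 1) →
      absE (∑ i, ∑ j, algebraMap F E (c i j) * ξ ^ (i:ℕ) * πE ^ (j:ℕ)) ≤ 1 := by
    intro c hc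
    rw [hval c]
    refine Finset.sup'_le _ _ fun j _ => ?_
    refine mul_le_one₀ (Finset.sup'_le _ _ fun i _ => hc i j) (hqpow _).le (hqpowle j)
  have hmemE' : ∀ c : Fin f → Fin e → F,
      absE (∑ i, ∑ j, algebraMap F E (c i j) * ξ ^ (i:ℕ) * πE ^ (j:ℕ)) ≤ 1 →
      ∀ i j, A.abs (c i j) ≤ 1 := by
    intro c hc i j
    rw [hval c] at hc
    have h1 : A.abs (c i j) * q ^ (-((j:ℕ):ℝ) / (e:ℝ)) ≤ 1 := by
      calc A.abs (c i j) * q ^ (-((j:ℕ):ℝ) / (e:ℝ))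
          ≤ (Finset.univ.sup' hnef fun i => A.abs (c i j)) * q ^ (-((j:ℕ):ℝ) / (e:ℝ)) :=
            mul_le_mul_of_nonneg_right
              (Finset.le_sup' (fun i => A.abs (c i j)) (Finset.mem_univ i)) (hqpow _).le
        _ ≤ _ := Finset.le_sup' (fun j : Fin e =>
            (Finset.univ.sup' hnef fun i => A.abs (c i j)) * q ^ (-((j:ℕ):ℝ) / (e:ℝ)))
            (Finset.mem_univ j)
        _ ≤ 1 := hc
    exact coefBound A hq hdisc j.isLt he h1
  -- the basis ξ^i π^j of E over F
  have hli : LinearIndependent F (fun p : Fin f × Fin e => ξ ^ (p.1 : ℕ) * πE ^ (p.2 : ℕ)) := by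
    rw [Fintype.linearIndependent_iff]
    intro g hg p
    have h1 : ∑ i, ∑ j, algebraMap F E (g (i, j)) * ξ ^ (i:ℕ) * πE ^ (j:ℕ) = 0 := by
      rw [← hg, Fintype.sum_prod_type]
      exact Finset.sum_congr rfl fun i _ => Finset.sum_congr rfl fun j _ => by
        rw [Algebra.smul_def, mul_assoc]
    exact hcoef0 (fun i j => g (i, j)) h1 p.1 p.2
  have hcard : Fintype.card (Fin f × Fin e) = Module.finrank F E := by
    simp [hdeg, mul_comm]
  set B : Module.Basis (Fin f × Fin e) F E := basisOfLinearIndependentOfCardEqFinrank hli hcard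
    with hBdef
  have hB : ∀ p : Fin f × Fin e, B p = ξ ^ (p.1 : ℕ) * πE ^ (p.2 : ℕ) := by
    intro p
    rw [hBdef, coe_basisOfLinearIndependentOfCardEqFinrank]
  have hrepr : ∀ y : E, ∑ i, ∑ j, algebraMap F E (B.repr y (i, j)) * ξ ^ (i:ℕ) * πE ^ (j:ℕ)
      = y := by
    intro y
    conv_rhs => rw [← Module.Basis.sum_repr B y]
    rw [Fintype.sum_prod_type]
    exact Finset.sum_congr rfl fun i _ => Finset.sum_congr rfl fun j _ => by
      rw [Algebra.smul_def, hB (i, j), mul_assoc]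
  have hreprBound : ∀ y : E, absE y ≤ 1 → ∀ p : Fin f × Fin e, A.abs (B.repr y p) ≤ 1 := by
    intro y hy p
    have := hmemE' (fun i j => B.repr y (i, j)) (by rw [hrepr y]; exact hy) p.1 p.2
    exact this
  -- the restriction-of-scalars linear map
  set Φ : ((Fin f × Fin e × Fin r) → F) →ₗ[F] (Fin r → E) :=
    { toFun := fun x ℓ => ∑ i, ∑ j, algebraMap F E (x (i, j, ℓ)) * ξ ^ (i:ℕ) * πE ^ (j:ℕ)
      map_add' := by
        intro x y
        funext ℓ
        show ∑ i, ∑ j, algebraMap F E ((x + y) (i, j, ℓ)) * ξ ^ (i:ℕ) * πE ^ (j:ℕ) = _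
        simp only [Pi.add_apply, map_add, add_mul, Finset.sum_add_distrib]
      map_smul' := by
        intro a x
        funext ℓ
        show (∑ i, ∑ j, algebraMap F E ((a • x) (i, j, ℓ)) * ξ ^ (i:ℕ) * πE ^ (j:ℕ))
          = a • (∑ i, ∑ j, algebraMap F E (x (i, j, ℓ)) * ξ ^ (i:ℕ) * πE ^ (j:ℕ))
        conv_rhs => rw [Algebra.smul_def, Finset.mul_sum]
        refine Finset.sum_congr rfl fun i _ => ?_
        conv_rhs => rw [Finset.mul_sum]
        refine Finset.sum_congr rfl fun j _ => ?_
        rw [Pi.smul_apply, smul_eq_mul, map_mul]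
        ring } with hΦdef
  have hΦ : ∀ x, Φ x = fun ℓ => ∑ i, ∑ j,
      algebraMap F E (x (i, j, ℓ)) * ξ ^ (i:ℕ) * πE ^ (j:ℕ) := fun x => rfl
  set μ : ((Fin f × Fin e × Fin r) → F) → ℝ :=
    fun x : (Fin f × Fin e × Fin r) → F =>
      (νE.nu (fun ℓ => ∑ i, ∑ j, algebraMap F E (x (i, j, ℓ)) * ξ ^ (i : ℕ) * πE ^ (j : ℕ)))
        ^ (((e * f : ℕ) : ℝ))⁻¹ with hμdef
  have hμΦ : ∀ x, μ x = (νE.nu (Φ x)) ^ (((e * f : ℕ) : ℝ))⁻¹ := fun x => rfl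
  have hwFo' : IsOrthogonalFor A μ wF := hwFo
  have hμ0 : ∀ x, 0 ≤ μ x := fun x => Real.rpow_nonneg (νE.nonneg _) _
  -- rpow cancellation
  have hcancel : ∀ t : ℝ, 0 ≤ t → (t ^ (e * f)) ^ (((e * f : ℕ) : ℝ))⁻¹ = t := by
    intro t ht
    rw [← Real.rpow_natCast t (e * f), ← Real.rpow_mul ht, mul_inv_cancel₀ hnR,
      Real.rpow_one]
  have hμsmul : ∀ (a : F) (x : (Fin f × Fin e × Fin r) → F), μ (a • x) = A.abs a * μ x := by
    intro a x
    rw [hμΦ, hμΦ, map_smul]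
    have h1 : a • Φ x = (algebraMap F E a) • Φ x := by
      funext ℓ
      rw [Pi.smul_apply, Pi.smul_apply, Algebra.smul_def, smul_eq_mul]
    rw [h1, νE.smul_eq, hAE, hext]
    rw [Real.mul_rpow (pow_nonneg (A.nonneg a) _) (νE.nonneg _), hcancel _ (A.nonneg a)]
  -- uE basis vectors have integral components
  have huEL : ∀ ℓ, uE ℓ ∈ {v : Fin r → E | ∀ ℓ', absE (v ℓ') ≤ 1} := by
    intro ℓ
    rw [huE.2 (uE ℓ)]
    refine ⟨fun ℓ' => if ℓ' = ℓ then 1 else 0, fun ℓ' => ?_, ?_⟩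
    · by_cases h : ℓ' = ℓ <;> simp [h, AE.abs_one, AE.abs_zero]
    · rw [Finset.sum_eq_single ℓ (fun ℓ' _ h => by simp [h]) (by simp)]
      simp
  have huEcomp : ∀ ℓ ℓ', absE (uE ℓ ℓ') ≤ 1 := fun ℓ ℓ' => huEL ℓ ℓ'
  -- the second orthogonal basis w'
  set w' : (Fin f × Fin e × Fin r) → ((Fin f × Fin e × Fin r) → F) :=
    fun p p' => B.repr (ξ ^ (p.1 : ℕ) * πE ^ (p.2.1 : ℕ) * uE p.2.2 p'.2.2) (p'.1, p'.2.1)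
    with hw'def
  have hΦw' : ∀ p, Φ (w' p) = (ξ ^ (p.1 : ℕ) * πE ^ (p.2.1 : ℕ)) • uE p.2.2 := by
    intro p
    funext ℓ'
    rw [hΦ]
    show ∑ i, ∑ j, algebraMap F E (w' p (i, j, ℓ')) * ξ ^ (i:ℕ) * πE ^ (j:ℕ) = _
    rw [hw'def]
    rw [hrepr (ξ ^ (p.1 : ℕ) * πE ^ (p.2.1 : ℕ) * uE p.2.2 ℓ')]
    rw [Pi.smul_apply, smul_eq_mul]
  -- Φ of a combination of w'
  have hΦsum : ∀ c : (Fin f × Fin e × Fin r) → F,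
      Φ (∑ p, c p • w' p) = ∑ ℓ, (∑ i, ∑ j,
        algebraMap F E (c (i, j, ℓ)) * ξ ^ (i:ℕ) * πE ^ (j:ℕ)) • uE ℓ := by
    intro c
    rw [map_sum]
    have h1 : ∀ p : Fin f × Fin e × Fin r, Φ (c p • w' p)
        = (algebraMap F E (c p) * ξ ^ (p.1 : ℕ) * πE ^ (p.2.1 : ℕ)) • uE p.2.2 := by
      intro p
      rw [map_smul, hΦw' p, ← smul_assoc]
      have hsm : c p • (ξ ^ (p.1 : ℕ) * πE ^ (p.2.1 : ℕ))
          = algebraMap F E (c p) * ξ ^ (p.1 : ℕ) * πE ^ (p.2.1 : ℕ) := by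
        rw [Algebra.smul_def, mul_assoc]
      rw [hsm]
    rw [Finset.sum_congr rfl fun p _ => h1 p]
    rw [Fintype.sum_prod_type]
    have h2 : ∀ i : Fin f, ∑ pjl : Fin e × Fin r,
        (algebraMap F E (c (i, pjl.1, pjl.2)) * ξ ^ (i : ℕ) * πE ^ (pjl.1 : ℕ)) • uE pjl.2
        = ∑ ℓ, ∑ j, (algebraMap F E (c (i, j, ℓ)) * ξ ^ (i : ℕ) * πE ^ (j : ℕ)) • uE ℓ := by
      intro i
      rw [Fintype.sum_prod_type, Finset.sum_comm]
    rw [Finset.sum_congr rfl fun i _ => h2 i, Finset.sum_comm]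
    refine Finset.sum_congr rfl fun ℓ _ => ?_
    rw [Finset.sum_smul]
    refine Finset.sum_congr rfl fun i _ => ?_
    rw [Finset.sum_smul]
  have hΦ0 : ∀ x, Φ x = 0 → x = 0 := by
    intro x hx
    funext p
    have h1 : ∑ i, ∑ j, algebraMap F E (x (i, j, p.2.2)) * ξ ^ (i:ℕ) * πE ^ (j:ℕ) = 0 := by
      have := congrFun hx p.2.2
      rw [hΦ] at this
      exact this
    have h2 := hcoef0 (fun i j => x (i, j, p.2.2)) h1 p.1 p.2.1
    show x (p.1, p.2.1, p.2.2) = 0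
    exact h2
  have hw'ent : ∀ p p', A.abs (w' p p') ≤ 1 := by
    intro p p'
    rw [hw'def]
    apply hreprBound
    rw [hEmul, hEmul, abs_pow_of absE hEz hEmul, hξ, one_pow, one_mul, habsπ]
    calc q ^ (-((p.2.1 : ℕ) : ℝ) / (e : ℝ)) * absE (uE p.2.2 p'.2.2)
        ≤ 1 * 1 := mul_le_mul (hqpowle p.2.1) (huEcomp _ _) (hE0 _) zero_le_one
      _ = 1 := one_mul 1
  have hw'L : IsLatticeBasis A w' {x : (Fin f × Fin e × Fin r) → F | ∀ p, A.abs (x p) ≤ 1} := by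
    constructor
    · rw [Fintype.linearIndependent_iff]
      intro g hg p
      have h1 : Φ (∑ p, g p • w' p) = 0 := by rw [hg, map_zero]
      rw [hΦsum g] at h1
      have h2 : ∀ ℓ, (∑ i, ∑ j, algebraMap F E (g (i, j, ℓ)) * ξ ^ (i:ℕ) * πE ^ (j:ℕ)) = 0 :=
        Fintype.linearIndependent_iff.mp huE.1 _ h1
      have h3 := hcoef0 (fun i j => g (i, j, p.2.2)) (h2 p.2.2) p.1 p.2.1
      exact h3
    · intro x
      constructor
      · intro hx
        have hΦxLE : Φ x ∈ {v : Fin r → E | ∀ ℓ, absE (v ℓ) ≤ 1} := by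
          intro ℓ
          rw [hΦ]
          exact hmemE (fun i j => x (i, j, ℓ)) (fun i j => hx (i, j, ℓ))
        obtain ⟨dd, hdd1, hddeq⟩ := (huE.2 (Φ x)).mp hΦxLE
        have habsdd : ∀ ℓ, absE (dd ℓ) ≤ 1 := by
          intro ℓ
          have h1 := hdd1 ℓ
          rw [hAE] at h1
          exact (pow_le_one_iff_of_nonneg (hE0 _) hn0.ne').mp h1
        refine ⟨fun p => B.repr (dd p.2.2) (p.1, p.2.1), fun p => hreprBound _ (habsdd _) _, ?_⟩
        have h4 : Φ (∑ p, B.repr (dd p.2.2) (p.1, p.2.1) • w' p) = Φ x := by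
          rw [hΦsum]
          rw [hddeq]
          refine Finset.sum_congr rfl fun ℓ _ => ?_
          congr 1
          exact hrepr (dd ℓ)
        have h5 := hΦ0 (x - ∑ p, B.repr (dd p.2.2) (p.1, p.2.1) • w' p)
          (by rw [map_sub, h4, sub_self])
        have h6 := sub_eq_zero.mp h5
        exact h6
      · rintro ⟨c, hc, rfl⟩ p'
        have h1 : (∑ p, c p • w' p) p' = ∑ p, c p * w' p p' := by
          rw [Finset.sum_apply]
          exact Finset.sum_congr rfl fun p _ => by rw [Pi.smul_apply, smul_eq_mul]
        rw [h1]
        refine ultra_sum_le A.abs A.abs_zero A.ultra _ _ zero_le_one ?_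
        intro p _
        rw [A.map_mul]
        exact mul_le_one₀ (hc p) (A.nonneg _) (hw'ent p p')
  have hμw' : ∀ p : Fin f × Fin e × Fin r,
      μ (w' p) = q ^ (-((p.2.1 : ℕ) : ℝ) / (e : ℝ)) * νE.nu (uE p.2.2) ^ (((e * f : ℕ) : ℝ))⁻¹ := by
    intro p
    rw [hμΦ, hΦw' p, νE.smul_eq, hAE, hEmul, abs_pow_of absE hEz hEmul, hξ, one_pow, one_mul,
      habsπ]
    rw [Real.mul_rpow (pow_nonneg (hqpow _).le _) (νE.nonneg _), hcancel _ (hqpow _).le]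
  have hw'o : IsOrthogonalFor A μ w' := by
    intro c
    -- left side
    rw [hμΦ, hΦsum c, huEo]
    have hterm : ∀ ℓ, νE.nu ((∑ i, ∑ j,
        algebraMap F E (c (i, j, ℓ)) * ξ ^ (i:ℕ) * πE ^ (j:ℕ)) • uE ℓ)
        = (absE (∑ i, ∑ j, algebraMap F E (c (i, j, ℓ)) * ξ ^ (i:ℕ) * πE ^ (j:ℕ))) ^ (e * f)
          * νE.nu (uE ℓ) := by
      intro ℓ
      rw [νE.smul_eq, hAE]
    rw [← Finset.sup'_univ_eq_ciSup (fun ℓ => νE.nu ((∑ i, ∑ j,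
        algebraMap F E (c (i, j, ℓ)) * ξ ^ (i:ℕ) * πE ^ (j:ℕ)) • uE ℓ))]
    rw [sup'_rpow Finset.univ_nonempty _ (fun ℓ _ => νE.nonneg _) (by positivity)]
    have hterm2 : ∀ ℓ : Fin r, νE.nu ((∑ i, ∑ j,
        algebraMap F E (c (i, j, ℓ)) * ξ ^ (i:ℕ) * πE ^ (j:ℕ)) • uE ℓ) ^ (((e * f : ℕ) : ℝ))⁻¹
        = Finset.univ.sup' hnee (fun j : Fin e =>
            Finset.univ.sup' hnef (fun i : Fin f =>
              A.abs (c (i, j, ℓ)) * (q ^ (-((j:ℕ):ℝ) / (e:ℝ))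
                * νE.nu (uE ℓ) ^ (((e * f : ℕ) : ℝ))⁻¹))) := by
      intro ℓ
      rw [hterm ℓ, Real.mul_rpow (pow_nonneg (hE0 _) _) (νE.nonneg _), hcancel _ (hE0 _)]
      rw [hval (fun i j => c (i, j, ℓ))]
      rw [sup'_mul_right hnee _ (Real.rpow_nonneg (νE.nonneg _) _)]
      refine Finset.sup'_congr hnee rfl fun j _ => ?_
      rw [mul_assoc, sup'_mul_right hnef _
        (mul_nonneg (hqpow _).le (Real.rpow_nonneg (νE.nonneg _) _))]
    rw [Finset.sup'_congr Finset.univ_nonempty rfl (fun ℓ _ => hterm2 ℓ)]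
    -- right side
    have hrhs : ∀ p : Fin f × Fin e × Fin r, μ (c p • w' p)
        = A.abs (c p) * (q ^ (-((p.2.1:ℕ):ℝ) / (e:ℝ))
            * νE.nu (uE p.2.2) ^ (((e * f : ℕ) : ℝ))⁻¹) := by
      intro p
      rw [hμsmul, hμw' p]
    rw [← Finset.sup'_univ_eq_ciSup (fun p => μ (c p • w' p))]
    rw [Finset.sup'_congr Finset.univ_nonempty rfl (fun p _ => hrhs p)]
    exact sup'_prod3 (fun p : Fin f × Fin e × Fin r => A.abs (c p)
      * (q ^ (-((p.2.1:ℕ):ℝ) / (e:ℝ)) * νE.nu (uE p.2.2) ^ (((e * f : ℕ) : ℝ))⁻¹))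
  -- reindex wF and compare with w'
  have hcards : Fintype.card (Fin f × Fin e × Fin r) = Fintype.card (Fin (e * f * r)) := by
    simp only [Fintype.card_prod, Fintype.card_fin]
    ring
  set σ : (Fin f × Fin e × Fin r) ≃ Fin (e * f * r) := Fintype.equivOfCardEq hcards with hσdef
  show ∏ p, μ (wF p) = _
  clear_value μ
  have h1 : ∏ p, μ (wF p) = ∏ p' : Fin f × Fin e × Fin r, μ ((wF ∘ σ) p') :=
    (Equiv.prod_comp σ (fun p => μ (wF p))).symm
  have h2 : ∏ p' : Fin f × Fin e × Fin r, μ ((wF ∘ σ) p')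
      = ∏ p' : Fin f × Fin e × Fin r, μ (w' p') :=
    prod_orthogonal_eq μ hμ0 hμsmul (hwF.comp_equiv σ) hw'L (hwFo'.comp_equiv σ) hw'o
  -- compute the product over w'
  set T : ℝ := ∏ ℓ, νE.nu (uE ℓ) ^ (((e * f : ℕ) : ℝ))⁻¹ with hTdef
  set Se : ℝ := ∑ j : Fin e, (-((j:ℕ):ℝ) / (e : ℝ)) with hSedef
  have h3 : ∏ p' : Fin f × Fin e × Fin r, μ (w' p')
      = ((q ^ Se) ^ r * T ^ e) ^ f := by
    rw [Finset.prod_congr rfl (fun p _ => hμw' p)]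
    rw [Fintype.prod_prod_type]
    have hinner : ∀ i : Fin f, ∏ jl : Fin e × Fin r,
        q ^ (-((jl.1:ℕ):ℝ) / (e:ℝ)) * νE.nu (uE jl.2) ^ (((e * f : ℕ) : ℝ))⁻¹
        = (q ^ Se) ^ r * T ^ e := by
      intro i
      rw [Fintype.prod_prod_type]
      have hj : ∀ j : Fin e, ∏ ℓ : Fin r,
          q ^ (-((j:ℕ):ℝ) / (e:ℝ)) * νE.nu (uE ℓ) ^ (((e * f : ℕ) : ℝ))⁻¹
          = (q ^ (-((j:ℕ):ℝ) / (e:ℝ))) ^ r * T := by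
        intro j
        rw [Finset.prod_mul_distrib, Finset.prod_const, Finset.card_univ, Fintype.card_fin,
          hTdef]
      rw [Finset.prod_congr rfl (fun j _ => hj j), Finset.prod_mul_distrib,
        Finset.prod_const, Finset.card_univ, Fintype.card_fin, Finset.prod_pow]
      congr 1
      congr 1
      rw [hSedef, rpow_sum_helper hq0]
    rw [Finset.prod_congr rfl (fun i _ => hinner i), Finset.prod_const, Finset.card_univ,
      Fintype.card_fin]
  have hSe : Se = -((e:ℝ) - 1) / 2 := by
    rw [hSedef]
    have hsum : ∑ j : Fin e, ((j:ℕ):ℝ) = (e:ℝ) * ((e:ℝ) - 1) / 2 := by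
      rw [Fin.sum_univ_eq_sum_range (fun i => (i:ℝ)) e]
      have h := Finset.sum_range_id_mul_two e
      have hcast : ((∑ i ∈ Finset.range e, i : ℕ) : ℝ) * 2 = (e:ℝ) * ((e:ℝ) - 1) := by
        rw [← Nat.cast_ofNat, ← Nat.cast_mul, h]
        push_cast [Nat.cast_sub (by omega : 1 ≤ e)]
        ring
      rw [← Nat.cast_sum]
      linarith
    have he' : ((e : ℝ)) ≠ 0 := (Nat.cast_pos.mpr he).ne'
    have : ∑ j : Fin e, (-((j:ℕ):ℝ) / (e : ℝ)) = -(∑ j : Fin e, ((j:ℕ):ℝ)) / (e : ℝ) := by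
      rw [← Finset.sum_div, Finset.sum_neg_distrib]
    rw [this, hsum]
    field_simp
  -- final arithmetic
  rw [h1, h2, h3]
  have hTef : T ^ (e * f) = ∏ ℓ, νE.nu (uE ℓ) := by
    rw [hTdef, ← Finset.prod_pow]
    refine Finset.prod_congr rfl fun ℓ _ => ?_
    rw [← Real.rpow_natCast (νE.nu (uE ℓ) ^ (((e * f : ℕ) : ℝ))⁻¹) (e * f),
      ← Real.rpow_mul (νE.nonneg _), inv_mul_cancel₀ hnR, Real.rpow_one]
  have hexpand : ((q ^ Se) ^ r * T ^ e) ^ f = (q ^ Se) ^ (r * f) * T ^ (e * f) := by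
    rw [mul_pow, ← pow_mul, ← pow_mul]
  rw [hexpand, hTef]
  congr 1
  rw [← Real.rpow_natCast (q ^ Se) (r * f), ← Real.rpow_mul hq0.le,
    ← Real.rpow_mul hq0.le]
  congr 1
  rw [hSe]
  push_cast [Nat.cast_sub (by omega : 1 ≤ e)]
  ring
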